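/- Minimization property of the majorant over the dual variable: with the setting of the error equality, for any x̃ ∈ D(A), ‖x − x̃‖² + ‖A(x − x̃)‖² = min over ψ ∈ D(A*) of M(x̃, ψ), where M(x̃, ψ) = ‖f − x̃ − A*ψ‖² + ‖ψ − A x̃‖², and the minimum is attained at ψ = y. -/

import Mathlib

open scoped ComplexInnerProductSpace

/-- Minimization property of the majorant over the dual variable:
the primal error equals the minimum of the majorant over ψ ∈ D(A*),
attained at ψ = y. -/
theorem stmt_4
    {H1 H2 : Type*} [NormedAddCommGroup H1] [InnerProductSpace ℂ H1] [CompleteSpace H1]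
    [NormedAddCommGroup H2] [InnerProductSpace ℂ H2] [CompleteSpace H2]
    (A : H1 →ₗ.[ℂ] H2) (hd : Dense (A.domain : Set H1)) (hc : A.IsClosed)
    (f : H1) (x : A.domain) (y : A.adjoint.domain)
    (h1 : A.adjoint y + (x : H1) = f) (h2 : A x = (y : H2))
    (xt : A.domain) :
    (∀ ψ : A.adjoint.domain,
      ‖(x : H1) - (xt : H1)‖ ^ 2 + ‖A (x - xt)‖ ^ 2
        ≤ ‖f - (xt : H1) - A.adjoint ψ‖ ^ 2 + ‖(ψ : H2) - A xt‖ ^ 2) ∧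
    ‖(x : H1) - (xt : H1)‖ ^ 2 + ‖A (x - xt)‖ ^ 2
      = ‖f - (xt : H1) - A.adjoint y‖ ^ 2 + ‖(y : H2) - A xt‖ ^ 2 := by
  have key : ∀ ψ : A.adjoint.domain,
      ‖f - (xt : H1) - A.adjoint ψ‖ ^ 2 + ‖(ψ : H2) - A xt‖ ^ 2
        = ‖(x : H1) - (xt : H1)‖ ^ 2 + ‖A (x - xt)‖ ^ 2
          + (‖A.adjoint (y - ψ)‖ ^ 2 + ‖((y - ψ : A.adjoint.domain) : H2)‖ ^ 2) := by
    intro ψ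
    set u : A.adjoint.domain := y - ψ with hu
    set e : A.domain := x - xt with he
    have hAe : A e = A x - A xt := A.map_sub x xt
    have hcoe : ((e : A.domain) : H1) = (x : H1) - (xt : H1) := rfl
    have h3 : f - (xt : H1) - A.adjoint ψ = A.adjoint u + ((e : A.domain) : H1) := by
      rw [hu, A.adjoint.map_sub, hcoe, ← h1]
      abel
    have h4 : (ψ : H2) - A xt = A e - (u : H2) := by
      rw [hAe, h2]
      push_cast [hu]
      abel
    have hadj : (inner ℂ (A.adjoint u) ((e : A.domain) : H1) : ℂ) = inner ℂ (u : H2) (A e) :=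
      (A.adjoint_isFormalAdjoint hd) u e
    rw [h3, h4, hcoe.symm]
    rw [@norm_add_sq ℂ, @norm_sub_sq ℂ]
    have hre : RCLike.re (inner ℂ (A.adjoint u) ((e : A.domain) : H1) : ℂ)
        = RCLike.re (inner ℂ (A e) (u : H2) : ℂ) := by
      rw [hadj, ← inner_conj_symm (A e) (u : H2), RCLike.conj_re]
    rw [hre]
    ring
  constructor
  · intro ψ
    rw [key ψ]
    exact le_add_of_nonneg_right (by positivity)
  · rw [key y]
    simp
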